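/- For $t\in(-1,1)$ let $\rho=\rho(t)=\sqrt{1+t^2}$, $y(t)=(2-\rho)^{-2/3}(1+\rho)^{-1/3}$, $x(t)=t\,y(t)$, and $r(t)=(x(t),y(t))$. Then for every $t\in(-1,1)$ the unit tangent vector satisfies $\dfrac{r'(t)}{|r'(t)|}=\dfrac{\big(1+\rho,\;t\big)}{\sqrt{2\rho\,(1+\rho)}}$. -/

import Mathlib

open Set

noncomputable def ρ (t : ℝ) : ℝ := Real.sqrt (1 + t ^ 2)

noncomputable def yfun (t : ℝ) : ℝ :=
  (2 - ρ t) ^ (-(2 : ℝ) / 3) * (1 + ρ t) ^ (-(1 : ℝ) / 3)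

noncomputable def xfun (t : ℝ) : ℝ := t * yfun t

lemma rho_pos (t : ℝ) : 0 < ρ t := Real.sqrt_pos.2 (by positivity)

lemma rho_sq (t : ℝ) : ρ t ^ 2 = 1 + t ^ 2 := Real.sq_sqrt (by positivity)

lemma rho_lt_two {t : ℝ} (ht : t ∈ Ioo (-1 : ℝ) 1) : ρ t < 2 := by
  obtain ⟨h1, h2⟩ := ht
  have ht2 : t ^ 2 < 1 := by nlinarith
  have : (1 : ℝ) + t ^ 2 < 4 := by nlinarith
  calc ρ t < Real.sqrt 4 := Real.sqrt_lt_sqrt (by positivity) this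
    _ = 2 := by rw [show (4:ℝ) = 2 ^ 2 by norm_num, Real.sqrt_sq (by norm_num)]

lemma hasDerivAt_rho (t : ℝ) : HasDerivAt ρ (t / ρ t) t := by
  have h : HasDerivAt (fun s : ℝ => 1 + s ^ 2) (2 * t) t := by
    simpa using (hasDerivAt_pow 2 t).const_add 1
  have := h.sqrt (by positivity)
  refine this.congr_deriv ?_
  rw [ρ]
  field_simp

lemma hasDerivAt_yfun {t : ℝ} (ht : t ∈ Ioo (-1 : ℝ) 1) :
    HasDerivAt yfun (t * yfun t / ((2 - ρ t) * (1 + ρ t))) t := by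
  have hA : (0 : ℝ) < 2 - ρ t := by linarith [rho_lt_two ht]
  have hB : (0 : ℝ) < 1 + ρ t := by linarith [rho_pos t]
  have hρ : ρ t ≠ 0 := (rho_pos t).ne'
  have h1 : HasDerivAt (fun s => 2 - ρ s) (-(t / ρ t)) t :=
    (hasDerivAt_rho t).const_sub 2
  have h2 : HasDerivAt (fun s => 1 + ρ s) (t / ρ t) t :=
    (hasDerivAt_rho t).const_add 1
  have g1 := h1.rpow_const (p := -(2 : ℝ) / 3) (Or.inl hA.ne')
  have g2 := h2.rpow_const (p := -(1 : ℝ) / 3) (Or.inl hB.ne')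
  have := g1.mul g2
  refine this.congr_deriv ?_
  symm
  rw [Real.rpow_sub hA, Real.rpow_sub hB, Real.rpow_one, Real.rpow_one, yfun]
  have hρsq := rho_sq t
  field_simp
  ring

lemma hasDerivAt_xfun {t : ℝ} (ht : t ∈ Ioo (-1 : ℝ) 1) :
    HasDerivAt xfun (yfun t / (2 - ρ t)) t := by
  have hA : (0 : ℝ) < 2 - ρ t := by linarith [rho_lt_two ht]
  have hB : (0 : ℝ) < 1 + ρ t := by linarith [rho_pos t]
  have := (hasDerivAt_id t).mul (hasDerivAt_yfun ht)
  refine this.congr_deriv ?_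
  symm
  simp only [id]
  field_simp
  linear_combination yfun t * rho_sq t

/-- The unit tangent vector of the boundary parametrization. -/
theorem unit_tangent_formula :
    ∀ t ∈ Ioo (-1 : ℝ) 1,
      (Real.sqrt ((deriv xfun t) ^ 2 + (deriv yfun t) ^ 2))⁻¹ •
          ((deriv xfun t, deriv yfun t) : ℝ × ℝ) =
        (Real.sqrt (2 * ρ t * (1 + ρ t)))⁻¹ • ((1 + ρ t, t) : ℝ × ℝ) := by
  intro t ht
  have hA : (0 : ℝ) < 2 - ρ t := by linarith [rho_lt_two ht]
  have hB : (0 : ℝ) < 1 + ρ t := by linarith [rho_pos t]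
  have hy : (0 : ℝ) < yfun t := by
    rw [yfun]; exact mul_pos (Real.rpow_pos_of_pos hA _) (Real.rpow_pos_of_pos hB _)
  set c : ℝ := yfun t / ((2 - ρ t) * (1 + ρ t)) with hc
  have hcpos : 0 < c := by positivity
  have hdx : deriv xfun t = c * (1 + ρ t) := by
    rw [(hasDerivAt_xfun ht).deriv, hc]; field_simp
  have hdy : deriv yfun t = c * t := by
    rw [(hasDerivAt_yfun ht).deriv, hc]; ring
  have hρsq := rho_sq t
  have hnorm : Real.sqrt ((deriv xfun t) ^ 2 + (deriv yfun t) ^ 2)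
      = c * Real.sqrt (2 * ρ t * (1 + ρ t)) := by
    rw [hdx, hdy]
    have : (c * (1 + ρ t)) ^ 2 + (c * t) ^ 2 = c ^ 2 * (2 * ρ t * (1 + ρ t)) := by
      linear_combination (-(c ^ 2)) * rho_sq t
    rw [this, Real.sqrt_mul (by positivity), Real.sqrt_sq hcpos.le]
  have hs : (0 : ℝ) < Real.sqrt (2 * ρ t * (1 + ρ t)) :=
    Real.sqrt_pos.2 (by nlinarith [rho_pos t])
  rw [hnorm, hdx, hdy, mul_inv]
  have h1 : ((c * (1 + ρ t), c * t) : ℝ × ℝ) = c • ((1 + ρ t, t) : ℝ × ℝ) := by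
    simp [Prod.smul_mk, smul_eq_mul]
  rw [h1, smul_smul]
  congr 1
  rw [mul_comm, ← mul_assoc, mul_inv_cancel₀ hcpos.ne', one_mul]
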